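/- Define L_n^{(α)}(x,δ) ∈ ℝ[x] by L_{-1}=0, L_0=1, and (n+1)L_{n+1}^{(α)}(x,δ) + (x - (2n+α+1+n(2n+2α+1)δ)) L_n^{(α)}(x,δ) + (n+α)(1+(n-1)δ)(1+(n+α)δ) L_{n-1}^{(α)}(x,δ) = 0. Then for all n ≥ 0, L_n^{(α)}(0,δ) = binom(n+α, n) ∏_{j=0}^{n-1}(1 + jδ). -/

import Mathlib

open Finset

/-- Generalized binomial coefficient `binom(a, k)` via falling factorials. -/
noncomputable def rbinom (a : ℝ) (k : ℕ) : ℝ :=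
  (∏ i ∈ Finset.range k, (a - i)) / (Nat.factorial k)

/-- Deformed Laguerre polynomials `L_n^{(α)}(x,δ)` defined by the three-term recurrence
`(n+1) L_{n+1} + (x - (2n+α+1+n(2n+2α+1)δ)) L_n + (n+α)(1+(n-1)δ)(1+(n+α)δ) L_{n-1} = 0`,
`L_{-1} = 0`, `L_0 = 1` (so `L_1 = α + 1 - x`). -/
noncomputable def deformedLaguerre (α δ : ℝ) : ℕ → ℝ → ℝ
  | 0, _ => 1
  | 1, x => α + 1 - x
  | (n + 2), x =>
      (((2 * ((n : ℝ) + 1) + α + 1 + ((n : ℝ) + 1) * (2 * ((n : ℝ) + 1) + 2 * α + 1) * δ) - x)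
          * deformedLaguerre α δ (n + 1) x
        - ((n : ℝ) + 1 + α) * (1 + (n : ℝ) * δ) * (1 + ((n : ℝ) + 1 + α) * δ)
          * deformedLaguerre α δ n x) / ((n : ℝ) + 2)

/-- Shorthand for the claimed value at zero. -/
noncomputable def dLval (α δ : ℝ) (n : ℕ) : ℝ :=
  rbinom ((n : ℝ) + α) n * ∏ j ∈ Finset.range n, (1 + (j : ℝ) * δ)

lemma dLval_succ (α δ : ℝ) (n : ℕ) :
    dLval α δ (n + 1) = dLval α δ n * ((α + n + 1) * (1 + n * δ)) / (n + 1) := by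
  have h1 : (∏ i ∈ Finset.range (n + 1), (((n : ℝ) + 1) + α - i))
      = (∏ i ∈ Finset.range n, ((n : ℝ) + α - i)) * (((n : ℝ) + 1) + α) := by
    rw [Finset.prod_range_succ']
    simp only [Nat.cast_add, Nat.cast_one, Nat.cast_zero]
    rw [show (((n : ℝ) + 1) + α - 0) = ((n : ℝ) + 1 + α) by ring]
    congr 1
    apply Finset.prod_congr rfl
    intro i _
    push_cast
    ring
  have h2 : (∏ j ∈ Finset.range (n + 1), (1 + (j : ℝ) * δ))
      = (∏ j ∈ Finset.range n, (1 + (j : ℝ) * δ)) * (1 + (n : ℝ) * δ) :=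
    Finset.prod_range_succ _ _
  have hfact : (Nat.factorial (n + 1) : ℝ) = (Nat.factorial n : ℝ) * (n + 1) := by
    rw [Nat.factorial_succ]; push_cast; ring
  have hf : (Nat.factorial n : ℝ) ≠ 0 := by positivity
  have hn1 : ((n : ℝ) + 1) ≠ 0 := by positivity
  simp only [dLval, rbinom]
  push_cast
  rw [h1, h2, hfact]
  generalize (∏ j ∈ Finset.range n, (1 + (j : ℝ) * δ)) = P
  field_simp
  ring

theorem deformedLaguerre_value_at_zero (α δ : ℝ) (hα : -1 < α) (hδ : 0 < δ) (n : ℕ) :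
    deformedLaguerre α δ n 0
      = rbinom ((n : ℝ) + α) n * ∏ j ∈ Finset.range n, (1 + (j : ℝ) * δ) := by
  suffices h : ∀ m : ℕ, deformedLaguerre α δ m 0 = dLval α δ m ∧
      deformedLaguerre α δ (m + 1) 0 = dLval α δ (m + 1) by
    exact (h n).1
  intro m
  induction m with
  | zero =>
      constructor
      · simp [deformedLaguerre, dLval, rbinom]
      · simp [deformedLaguerre, dLval, rbinom, Nat.factorial]; ring
  | succ k ih =>
      refine ⟨ih.2, ?_⟩
      have hrec : deformedLaguerre α δ (k + 2) 0 =
          (((2 * ((k : ℝ) + 1) + α + 1 + ((k : ℝ) + 1) * (2 * ((k : ℝ) + 1) + 2 * α + 1) * δ) - 0)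
              * deformedLaguerre α δ (k + 1) 0
            - ((k : ℝ) + 1 + α) * (1 + (k : ℝ) * δ) * (1 + ((k : ℝ) + 1 + α) * δ)
              * deformedLaguerre α δ k 0) / ((k : ℝ) + 2) := rfl
      rw [hrec, ih.1, ih.2, dLval_succ α δ (k + 1), dLval_succ α δ k]
      have hk1 : ((k : ℝ) + 1) ≠ 0 := by positivity
      have hk2 : ((k : ℝ) + 2) ≠ 0 := by positivity
      push_cast
      field_simp
      ring
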